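/- arXiv:2112.04080 — 4 statements merged into one kernel-verified Lean document; each statement's English description precedes it below -/
import Mathlib

section
/- Let T : D → Y be continuously Fréchet differentiable, x* ∈ D with T(x*) = 0 and T'(x*) invertible, and assume ‖T'(x*)⁻¹(T'(x) − T'(x*))‖ ≤ ψ₀‖x − x*‖ for all x ∈ D. If ϱ < 2/ψ₀, the closed ball B̄(x*, ϱ) ⊆ D, and y* ∈ B̄(x*, ϱ) satisfies T(y*) = 0, then y* = x*. -/
theorem stmt_8 {X Y : Type*} [NormedAddCommGroup X] [NormedSpace ℝ X] [CompleteSpace X]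
    [NormedAddCommGroup Y] [NormedSpace ℝ Y] [CompleteSpace Y]
    (D : Set X) (hD : IsOpen D) (hDc : Convex ℝ D)
    (T : X → Y) (T' : X → X →L[ℝ] Y) (hT : ∀ x ∈ D, HasFDerivAt T (T' x) x)
    (hT'c : ContinuousOn T' D)
    (xs : X) (hxs : xs ∈ D) (hTxs : T xs = 0)
    (A : X ≃L[ℝ] Y) (hA : (A : X →L[ℝ] Y) = T' xs)
    (ψ₀ : ℝ) (hψ₀ : 0 < ψ₀)
    (hL : ∀ x ∈ D,
      ‖(A.symm : Y →L[ℝ] X).comp (T' x - T' xs)‖ ≤ ψ₀ * ‖x - xs‖)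
    (ϱ : ℝ) (hϱ : ϱ < 2 / ψ₀) (hball : Metric.closedBall xs ϱ ⊆ D)
    (ys : X) (hys : ys ∈ Metric.closedBall xs ϱ) (hTys : T ys = 0) :
    ys = xs := by
  have hdist : ‖ys - xs‖ ≤ ϱ := by
    simpa [dist_eq_norm] using Metric.mem_closedBall.mp hys
  set v := ys - xs with hv
  -- segment points
  set γ : ℝ → X := fun t => xs + t • v with hγ
  have hγmem : ∀ t ∈ Set.Icc (0:ℝ) 1, γ t ∈ D := by
    intro t ht
    apply hball
    rw [Metric.mem_closedBall, dist_eq_norm]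
    have : γ t - xs = t • v := by simp [hγ]
    rw [this, norm_smul, Real.norm_eq_abs, abs_of_nonneg ht.1]
    calc t * ‖v‖ ≤ 1 * ‖v‖ := by
          apply mul_le_mul_of_nonneg_right ht.2 (norm_nonneg _)
      _ = ‖v‖ := one_mul _
      _ ≤ ϱ := hdist
  -- the auxiliary function
  set g : ℝ → X := fun t => γ t - (A.symm : Y →L[ℝ] X) (T (γ t)) - xs with hg
  have hg0 : g 0 = 0 := by simp [hg, hγ, hTxs]
  have hg1 : g 1 = v := by simp [hg, hγ, hTys, hv]
  have hgderiv : ∀ t ∈ Set.Icc (0:ℝ) 1,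
      HasDerivAt g (v - (A.symm : Y →L[ℝ] X) ((T' (γ t)) v)) t := by
    intro t ht
    have h1 : HasDerivAt γ v t := by
      simpa [hγ] using ((hasDerivAt_id t).smul_const v).const_add xs
    have h2 : HasDerivAt (fun t => T (γ t)) ((T' (γ t)) v) t :=
      (hT _ (hγmem t ht)).comp_hasDerivAt t h1
    have h3 : HasDerivAt (fun t => (A.symm : Y →L[ℝ] X) (T (γ t)))
        ((A.symm : Y →L[ℝ] X) ((T' (γ t)) v)) t :=
      ((A.symm : Y →L[ℝ] X).hasFDerivAt.comp_hasDerivAt t h2)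
    simpa [hg] using (h1.sub h3).sub_const xs
  have hbound : ∀ t ∈ Set.Ico (0:ℝ) 1,
      ‖v - (A.symm : Y →L[ℝ] X) ((T' (γ t)) v)‖ ≤ ψ₀ * ‖v‖ ^ 2 * t := by
    intro t ht
    have hmem := hγmem t ⟨ht.1, ht.2.le⟩
    have key : v - (A.symm : Y →L[ℝ] X) ((T' (γ t)) v)
        = -(((A.symm : Y →L[ℝ] X).comp (T' (γ t) - T' xs)) v) := by
      have : (A.symm : Y →L[ℝ] X) ((T' xs) v) = v := by
        rw [← hA]; exact A.symm_apply_apply v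
      simp [ContinuousLinearMap.comp_apply, ContinuousLinearMap.sub_apply, this]
    rw [key, norm_neg]
    calc ‖((A.symm : Y →L[ℝ] X).comp (T' (γ t) - T' xs)) v‖
        ≤ ‖(A.symm : Y →L[ℝ] X).comp (T' (γ t) - T' xs)‖ * ‖v‖ :=
          ContinuousLinearMap.le_opNorm _ _
      _ ≤ (ψ₀ * ‖γ t - xs‖) * ‖v‖ :=
          mul_le_mul_of_nonneg_right (hL _ hmem) (norm_nonneg _)
      _ = ψ₀ * ‖v‖ ^ 2 * t := by
          have : γ t - xs = t • v := by simp [hγ]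
          rw [this, norm_smul, Real.norm_eq_abs, abs_of_nonneg ht.1]
          ring
  -- apply the fencing lemma with B t = ψ₀ ‖v‖² t² / 2
  set B : ℝ → ℝ := fun t => ψ₀ * ‖v‖ ^ 2 * t ^ 2 / 2 with hB
  have hB' : ∀ t, HasDerivAt B (ψ₀ * ‖v‖ ^ 2 * t) t := by
    intro t
    have h := ((hasDerivAt_pow 2 t).const_mul (ψ₀ * ‖v‖ ^ 2)).div_const 2
    exact h.congr_deriv (by push_cast; ring)
  have main : ‖g 1‖ ≤ B 1 := by
    refine image_norm_le_of_norm_deriv_right_le_deriv_boundary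
      (f := g) (f' := fun t => v - (A.symm : Y →L[ℝ] X) ((T' (γ t)) v))
      (a := 0) (b := 1) ?_ ?_ ?_ hB' ?_ (by norm_num)
    · exact fun t ht => (hgderiv t ht).continuousAt.continuousWithinAt
    · exact fun t ht =>
        (hgderiv t ⟨ht.1, ht.2.le⟩).hasDerivWithinAt
    · simp [hg0, hB]
    · exact hbound
  rw [hg1] at main
  -- conclude
  by_contra hne
  have hvne : v ≠ 0 := fun h => hne (by rwa [hv, sub_eq_zero] at h)
  have hvpos : 0 < ‖v‖ := norm_pos_iff.mpr hvne
  have : ‖v‖ ≤ ψ₀ / 2 * ϱ * ‖v‖ := by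
    calc ‖v‖ ≤ ψ₀ * ‖v‖ ^ 2 * 1 ^ 2 / 2 := main
      _ = ψ₀ / 2 * ‖v‖ * ‖v‖ := by ring
      _ ≤ ψ₀ / 2 * ϱ * ‖v‖ := by
          apply mul_le_mul_of_nonneg_right _ (norm_nonneg _)
          exact mul_le_mul_of_nonneg_left hdist (by positivity)
  have h1 : 1 ≤ ψ₀ / 2 * ϱ := by
    by_contra h
    push_neg at h
    nlinarith
  have : ϱ < 2 / ψ₀ := hϱ
  rw [div_mul_eq_mul_div, le_div_iff₀ (by norm_num), one_mul] at h1
  have : ψ₀ * ϱ < 2 := by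
    rw [lt_div_iff₀ hψ₀] at hϱ; linarith
  linarith [mul_comm ψ₀ ϱ]
end

section
/- Under the centered Hölder condition ‖T'(x*)⁻¹(T'(x) − T'(x*))‖ ≤ κ₀‖x − x*‖^q with κ₀ > 0, q ∈ (0,1], T(x*) = 0, if ϱ^q < (q+1)/κ₀, B̄(x*, ϱ) ⊆ D, and y* ∈ B̄(x*, ϱ) with T(y*) = 0, then y* = x*. -/
open Set

theorem stmt_9 {X Y : Type*} [NormedAddCommGroup X] [NormedSpace ℝ X] [CompleteSpace X]
    [NormedAddCommGroup Y] [NormedSpace ℝ Y] [CompleteSpace Y]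
    (D : Set X) (hD : IsOpen D) (hDc : Convex ℝ D)
    (T : X → Y) (T' : X → X →L[ℝ] Y) (hT : ∀ x ∈ D, HasFDerivAt T (T' x) x)
    (hT'c : ContinuousOn T' D)
    (xs : X) (hxs : xs ∈ D) (hTxs : T xs = 0)
    (A : X ≃L[ℝ] Y) (hA : (A : X →L[ℝ] Y) = T' xs)
    (κ₀ q : ℝ) (hκ₀ : 0 < κ₀) (hq : 0 < q) (hq1 : q ≤ 1)
    (hH : ∀ x ∈ D,
      ‖(A.symm : Y →L[ℝ] X).comp (T' x - T' xs)‖ ≤ κ₀ * ‖x - xs‖ ^ q)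
    (ϱ : ℝ) (hϱ0 : 0 ≤ ϱ) (hϱ : ϱ ^ q < (q + 1) / κ₀)
    (hball : Metric.closedBall xs ϱ ⊆ D)
    (ys : X) (hys : ys ∈ Metric.closedBall xs ϱ) (hTys : T ys = 0) :
    ys = xs := by
  by_contra hne
  set v : X := ys - xs with hv
  have hv0 : 0 < ‖v‖ := by
    simpa [hv, sub_ne_zero] using hne
  have hCρ : ‖v‖ ≤ ϱ := by
    have := hys
    rwa [Metric.mem_closedBall, dist_eq_norm] at this
  -- the path
  set γ : ℝ → X := fun t => xs + t • v with hγ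
  have hmem : ∀ t ∈ Icc (0:ℝ) 1, γ t ∈ D := by
    intro t ht
    apply hball
    rw [Metric.mem_closedBall, dist_eq_norm]
    have : ‖γ t - xs‖ = |t| * ‖v‖ := by simp [hγ, norm_smul]
    rw [this, abs_of_nonneg ht.1]
    calc t * ‖v‖ ≤ 1 * ‖v‖ := by
          apply mul_le_mul_of_nonneg_right ht.2 (norm_nonneg _)
      _ ≤ ϱ := by simpa using hCρ
  -- g t = γ t - A.symm (T (γ t)) - xs  (so g 0 = 0)
  set g : ℝ → X := fun t => γ t - (A.symm : Y →L[ℝ] X) (T (γ t)) - xs with hg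
  have hγd : ∀ t : ℝ, HasDerivAt γ v t := by
    intro t
    simpa [hγ] using ((hasDerivAt_id t).smul_const v).const_add xs
  have hgd : ∀ t ∈ Icc (0:ℝ) 1,
      HasDerivAt g (v - (A.symm : Y →L[ℝ] X) (T' (γ t) v)) t := by
    intro t ht
    have h1 : HasDerivAt (fun t => T (γ t)) (T' (γ t) v) t :=
      (hT _ (hmem t ht)).comp_hasDerivAt t (hγd t)
    have h2 : HasDerivAt (fun t => (A.symm : Y →L[ℝ] X) (T (γ t)))
        ((A.symm : Y →L[ℝ] X) (T' (γ t) v)) t :=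
      (A.symm : Y →L[ℝ] X).hasFDerivAt.comp_hasDerivAt t h1
    simpa [hg] using ((hγd t).sub h2).sub_const xs
  -- identify the derivative with the composed operator
  have hAid : ∀ w : X, (A.symm : Y →L[ℝ] X) (T' xs w) = w := by
    intro w
    rw [← hA]
    exact A.symm_apply_apply w
  have hderiv_eq : ∀ t : ℝ,
      v - (A.symm : Y →L[ℝ] X) (T' (γ t) v)
        = -(((A.symm : Y →L[ℝ] X).comp (T' (γ t) - T' xs)) v) := by
    intro t
    simp [ContinuousLinearMap.comp_apply, ContinuousLinearMap.sub_apply, map_sub,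
      hAid v]
  -- bound on the derivative
  have hbound : ∀ t ∈ Ico (0:ℝ) 1,
      ‖v - (A.symm : Y →L[ℝ] X) (T' (γ t) v)‖ ≤ (κ₀ * ‖v‖ ^ (q+1)) * t ^ q := by
    intro t ht
    rw [hderiv_eq, norm_neg]
    have h1 : ‖((A.symm : Y →L[ℝ] X).comp (T' (γ t) - T' xs)) v‖
        ≤ ‖(A.symm : Y →L[ℝ] X).comp (T' (γ t) - T' xs)‖ * ‖v‖ :=
      ContinuousLinearMap.le_opNorm _ v
    have h2 := hH (γ t) (hmem t ⟨ht.1, le_of_lt ht.2⟩)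
    have h3 : ‖γ t - xs‖ = t * ‖v‖ := by
      simp [hγ, norm_smul, abs_of_nonneg ht.1]
    have h4 : ‖γ t - xs‖ ^ q = t ^ q * ‖v‖ ^ q := by
      rw [h3, Real.mul_rpow ht.1 (norm_nonneg _)]
    calc ‖((A.symm : Y →L[ℝ] X).comp (T' (γ t) - T' xs)) v‖
        ≤ (κ₀ * (t ^ q * ‖v‖ ^ q)) * ‖v‖ := by
          refine h1.trans ?_
          apply mul_le_mul_of_nonneg_right _ (norm_nonneg _)
          rwa [← h4]
      _ = (κ₀ * ‖v‖ ^ (q+1)) * t ^ q := by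
          rw [Real.rpow_add hv0, Real.rpow_one]; ring
  -- the boundary function
  set c : ℝ := κ₀ * ‖v‖ ^ (q+1) with hc
  have hc0 : 0 ≤ c := by positivity
  have hBd : ∀ t : ℝ, HasDerivAt (fun t => c / (q+1) * t ^ (q+1)) (c * t ^ q) t := by
    intro t
    have := (Real.hasDerivAt_rpow_const (x := t) (p := q+1)
      (Or.inr (by linarith))).const_mul (c / (q+1))
    have hq1' : q + 1 ≠ 0 := by positivity
    refine this.congr_deriv ?_
    rw [add_sub_cancel_right, ← mul_assoc, div_mul_cancel₀ c hq1']
  have key := image_norm_le_of_norm_deriv_right_le_deriv_boundary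
    (f := g) (f' := fun t => v - (A.symm : Y →L[ℝ] X) (T' (γ t) v))
    (a := 0) (b := 1)
    (fun t ht => (hgd t ht).continuousAt.continuousWithinAt)
    (fun t ht => ((hgd t ⟨ht.1, le_of_lt ht.2⟩).hasDerivWithinAt))
    (B := fun t => c / (q+1) * t ^ (q+1)) (B' := fun t => c * t ^ q)
    (by simp [hg, hγ, hTxs]; positivity) hBd hbound
  have h1 : ‖g 1‖ ≤ c / (q+1) := by
    have := key (Set.right_mem_Icc.mpr zero_le_one)
    simpa using this
  have hxv : xs + v = ys := by simp [hv]
  have hg1 : g 1 = v := by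
    simp [hg, hγ, hxv, hTys]
    exact hv.symm
  rw [hg1] at h1
  -- derive contradiction
  have hvq : ‖v‖ ^ q ≤ ϱ ^ q :=
    Real.rpow_le_rpow (norm_nonneg _) hCρ (le_of_lt hq)
  have h5 : κ₀ * ϱ ^ q < q + 1 := by
    rw [lt_div_iff₀ hκ₀] at hϱ; linarith
  have hlt : c / (q+1) < ‖v‖ := by
    rw [hc, Real.rpow_add hv0, Real.rpow_one, div_lt_iff₀ (by linarith : (0:ℝ) < q+1)]
    nlinarith [mul_le_mul_of_nonneg_right (mul_le_mul_of_nonneg_left hvq hκ₀.le) hv0.le,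
      mul_lt_mul_of_pos_right h5 hv0]
  linarith [h1, hlt]
end

section
/- Let T be continuously Fréchet differentiable with T(x*) = 0, T'(x*) invertible, centered Lipschitz condition ‖T'(x*)⁻¹(T'(x) − T'(x*))‖ ≤ ψ₀‖x − x*‖ and Lipschitz condition ‖T'(x*)⁻¹(T'(x) − T'(y))‖ ≤ ψ‖x − y‖ on D with ψ₀ ≤ ψ. For x₀ ∈ D with ‖x₀ − x*‖ < 1/ψ₀, setting y₀ = x₀ − (1/2) T'(x₀)⁻¹ T(x₀), one has ‖y₀ − x*‖ ≤ η₁(‖x₀ − x*‖)‖x₀ − x*‖, where η₁(a) = (ψa/2 + (1 + ψ₀ a/2)/2)/(1 − ψ₀ a). -/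
set_option maxHeartbeats 1000000 in

theorem stmt_12 {X Y : Type*} [NormedAddCommGroup X] [NormedSpace ℝ X] [CompleteSpace X]
    [NormedAddCommGroup Y] [NormedSpace ℝ Y] [CompleteSpace Y]
    (D : Set X) (hD : IsOpen D) (hDc : Convex ℝ D)
    (T : X → Y) (T' : X → X →L[ℝ] Y) (hT : ∀ x ∈ D, HasFDerivAt T (T' x) x)
    (hT'c : ContinuousOn T' D)
    (xs : X) (hxs : xs ∈ D) (hTxs : T xs = 0)
    (A : X ≃L[ℝ] Y) (hA : (A : X →L[ℝ] Y) = T' xs)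
    (ψ₀ ψ : ℝ) (hψ₀ : 0 < ψ₀) (hψ : 0 < ψ) (hle : ψ₀ ≤ ψ)
    (hL0 : ∀ x ∈ D,
      ‖(A.symm : Y →L[ℝ] X).comp (T' x - T' xs)‖ ≤ ψ₀ * ‖x - xs‖)
    (hL : ∀ x ∈ D, ∀ y ∈ D,
      ‖(A.symm : Y →L[ℝ] X).comp (T' x - T' y)‖ ≤ ψ * ‖x - y‖)
    (x₀ : X) (hx₀ : x₀ ∈ D) (hseg : segment ℝ xs x₀ ⊆ D)
    (hx₀r : ‖x₀ - xs‖ < 1 / ψ₀)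
    (B : X ≃L[ℝ] Y) (hB : (B : X →L[ℝ] Y) = T' x₀)
    (y₀ : X) (hy₀ : y₀ = x₀ - (1 / 2 : ℝ) • B.symm (T x₀)) :
    ‖y₀ - xs‖ ≤
      ((ψ * ‖x₀ - xs‖ / 2 + (1 + ψ₀ * ‖x₀ - xs‖ / 2) / 2) / (1 - ψ₀ * ‖x₀ - xs‖)) *
        ‖x₀ - xs‖ := by
  have hζ : ψ₀ * ‖x₀ - xs‖ < 1 := by
    have := (lt_div_iff₀ hψ₀).mp hx₀r
    linarith
  set v := x₀ - xs with hv
  set a := ‖v‖ with ha2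
  have ha0 : 0 ≤ a := norm_nonneg _
  set p : ℝ → X := fun t => xs + t • v with hp_def
  have hmem : ∀ t ∈ Set.Icc (0:ℝ) 1, p t ∈ D := by
    intro t ht
    apply hseg
    rw [segment_eq_image']
    exact ⟨t, ht, rfl⟩
  set g : ℝ → X := fun t => (A.symm : Y →L[ℝ] X) (T (p t)) with hg_def
  set g' : ℝ → X := fun t => ((A.symm : Y →L[ℝ] X).comp (T' (p t))) v with hg'_def
  have hp : ∀ t : ℝ, HasDerivAt p v t := by
    intro t
    simpa [hp_def] using ((hasDerivAt_id t).smul_const v).const_add xs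
  have hderiv : ∀ t ∈ Set.Icc (0:ℝ) 1, HasDerivAt g (g' t) t := by
    intro t ht
    have h1 : HasFDerivAt T (T' (p t)) (p t) := hT _ (hmem t ht)
    have h2 : HasDerivAt (fun s => T (p s)) ((T' (p t)) v) t := h1.comp_hasDerivAt t (hp t)
    have h3 := ((A.symm : Y →L[ℝ] X).hasFDerivAt).comp_hasDerivAt t h2
    simpa [hg_def, hg'_def, Function.comp_def] using h3
  have hpc : Continuous p := by continuity
  have hg'c : ContinuousOn g' (Set.Icc (0:ℝ) 1) := by
    have h1 : ContinuousOn (fun t => T' (p t)) (Set.Icc (0:ℝ) 1) :=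
      hT'c.comp hpc.continuousOn hmem
    have h2 : ContinuousOn (fun t => (T' (p t)) v) (Set.Icc (0:ℝ) 1) :=
      h1.clm_apply continuousOn_const
    have h3 : ContinuousOn (fun t => (A.symm : Y →L[ℝ] X) ((T' (p t)) v)) (Set.Icc (0:ℝ) 1) :=
      (A.symm : Y →L[ℝ] X).continuous.comp_continuousOn h2
    simpa [hg'_def] using h3
  have hInt : IntervalIntegrable g' MeasureTheory.volume 0 1 := by
    apply ContinuousOn.intervalIntegrable
    rwa [Set.uIcc_of_le zero_le_one]
  have hFTC : ∫ t in (0:ℝ)..1, g' t = g 1 - g 0 :=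
    intervalIntegral.integral_eq_sub_of_hasDerivAt
      (fun t ht => hderiv t (by rwa [Set.uIcc_of_le zero_le_one] at ht)) hInt
  have hg0 : g 0 = 0 := by simp [hg_def, hp_def, hTxs]
  have hp1 : p 1 = x₀ := by simp [hp_def, hv]
  set C : X →L[ℝ] Y := T' x₀ with hC_def
  -- generic estimate
  have key : ∀ (S : X →L[ℝ] Y) (c : ℝ), (∀ t ∈ Set.Icc (0:ℝ) 1,
      ‖g' t - ((A.symm : Y →L[ℝ] X).comp S) v‖ ≤ c * |1 - t| * a) →
      ‖g 1 - g 0 - ((A.symm : Y →L[ℝ] X).comp S) v‖ ≤ c * a / 2 →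
      True := fun _ _ _ _ => trivial
  clear key
  have hE1 : ‖g 1 - g 0 - ((A.symm : Y →L[ℝ] X).comp C) v‖ ≤ ψ * a ^ 2 / 2 := by
    have heq : g 1 - g 0 - ((A.symm : Y →L[ℝ] X).comp C) v
        = ∫ t in (0:ℝ)..1, (g' t - ((A.symm : Y →L[ℝ] X).comp C) v) := by
      rw [intervalIntegral.integral_sub hInt intervalIntegrable_const, hFTC,
        intervalIntegral.integral_const]
      simp
    rw [heq]
    have hb : ∀ t ∈ Set.Ioc (0:ℝ) 1,
        ‖g' t - ((A.symm : Y →L[ℝ] X).comp C) v‖ ≤ ψ * a ^ 2 * (1 - t) := by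
      intro t ht
      have ht' : t ∈ Set.Icc (0:ℝ) 1 := Set.Ioc_subset_Icc_self ht
      have heq2 : g' t - ((A.symm : Y →L[ℝ] X).comp C) v
          = ((A.symm : Y →L[ℝ] X).comp (T' (p t) - C)) v := by
        have hcs : (A.symm : Y →L[ℝ] X).comp (T' (p t) - C)
            = (A.symm : Y →L[ℝ] X).comp (T' (p t)) - (A.symm : Y →L[ℝ] X).comp C :=
          ContinuousLinearMap.comp_sub _ _ _
        rw [hcs, ContinuousLinearMap.sub_apply]
      rw [heq2]
      calc ‖((A.symm : Y →L[ℝ] X).comp (T' (p t) - C)) v‖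
          ≤ ‖(A.symm : Y →L[ℝ] X).comp (T' (p t) - C)‖ * a :=
            ContinuousLinearMap.le_opNorm _ _
        _ ≤ (ψ * ‖p t - x₀‖) * a := by
            apply mul_le_mul_of_nonneg_right _ ha0
            exact hL _ (hmem t ht') _ hx₀
        _ = ψ * a ^ 2 * (1 - t) := by
            have : p t - x₀ = (t - 1) • v := by
              simp [hp_def, hv]
              module
            rw [this, norm_smul, Real.norm_eq_abs, abs_of_nonpos (by linarith [ht.2])]
            ring
    have hval : ∫ t in (0:ℝ)..1, ψ * a ^ 2 * (1 - t) = ψ * a ^ 2 / 2 := by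
      rw [intervalIntegral.integral_const_mul,
        intervalIntegral.integral_sub intervalIntegrable_const
          intervalIntegral.intervalIntegrable_id]
      simp
      ring
    calc ‖∫ t in (0:ℝ)..1, (g' t - ((A.symm : Y →L[ℝ] X).comp C) v)‖
        ≤ |∫ t in (0:ℝ)..1, ψ * a ^ 2 * (1 - t)| := by
          apply intervalIntegral.norm_integral_le_abs_of_norm_le
          · rw [MeasureTheory.ae_restrict_iff' measurableSet_uIoc]
            filter_upwards with t ht
            rw [Set.uIoc_of_le zero_le_one] at ht
            exact hb t ht
          · exact (continuous_const.mul (continuous_const.sub continuous_id)).intervalIntegrable 0 1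
      _ = ψ * a ^ 2 / 2 := by
          rw [hval, abs_of_nonneg (by positivity)]
  have hE2 : ‖g 1 - g 0 - v‖ ≤ ψ₀ * a ^ 2 / 2 := by
    have hAv : ((A.symm : Y →L[ℝ] X).comp (T' xs)) v = v := by
      rw [← hA]
      simp
    have heq : g 1 - g 0 - v = ∫ t in (0:ℝ)..1, (g' t - v) := by
      rw [intervalIntegral.integral_sub hInt intervalIntegrable_const, hFTC,
        intervalIntegral.integral_const]
      simp
    rw [heq]
    have hb : ∀ t ∈ Set.Ioc (0:ℝ) 1, ‖g' t - v‖ ≤ ψ₀ * a ^ 2 * t := by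
      intro t ht
      have ht' : t ∈ Set.Icc (0:ℝ) 1 := Set.Ioc_subset_Icc_self ht
      have heq2 : g' t - v = ((A.symm : Y →L[ℝ] X).comp (T' (p t) - T' xs)) v := by
        have hcs : (A.symm : Y →L[ℝ] X).comp (T' (p t) - T' xs)
            = (A.symm : Y →L[ℝ] X).comp (T' (p t)) - (A.symm : Y →L[ℝ] X).comp (T' xs) :=
          ContinuousLinearMap.comp_sub _ _ _
        rw [hcs, ContinuousLinearMap.sub_apply, hAv]
      rw [heq2]
      calc ‖((A.symm : Y →L[ℝ] X).comp (T' (p t) - T' xs)) v‖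
          ≤ ‖(A.symm : Y →L[ℝ] X).comp (T' (p t) - T' xs)‖ * a :=
            ContinuousLinearMap.le_opNorm _ _
        _ ≤ (ψ₀ * ‖p t - xs‖) * a := by
            apply mul_le_mul_of_nonneg_right _ ha0
            exact hL0 _ (hmem t ht')
        _ = ψ₀ * a ^ 2 * t := by
            have : p t - xs = t • v := by simp [hp_def]
            rw [this, norm_smul, Real.norm_eq_abs, abs_of_nonneg (le_of_lt ht.1)]
            ring
    have hval : ∫ t in (0:ℝ)..1, ψ₀ * a ^ 2 * t = ψ₀ * a ^ 2 / 2 := by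
      rw [intervalIntegral.integral_const_mul]
      simp
      ring
    calc ‖∫ t in (0:ℝ)..1, (g' t - v)‖
        ≤ |∫ t in (0:ℝ)..1, ψ₀ * a ^ 2 * t| := by
          apply intervalIntegral.norm_integral_le_abs_of_norm_le
          · rw [MeasureTheory.ae_restrict_iff' measurableSet_uIoc]
            filter_upwards with t ht
            rw [Set.uIoc_of_le zero_le_one] at ht
            exact hb t ht
          · exact (continuous_const.mul continuous_id).intervalIntegrable 0 1
      _ = ψ₀ * a ^ 2 / 2 := by
          rw [hval, abs_of_nonneg (by positivity)]
  have hg1 : ‖g 1‖ ≤ a + ψ₀ * a ^ 2 / 2 := by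
    have : g 1 = (g 1 - g 0 - v) + v := by rw [hg0]; abel
    rw [this]
    calc ‖(g 1 - g 0 - v) + v‖ ≤ ‖g 1 - g 0 - v‖ + ‖v‖ := norm_add_le _ _
      _ ≤ ψ₀ * a ^ 2 / 2 + a := by rw [← ha2]; linarith [hE2]
      _ = a + ψ₀ * a ^ 2 / 2 := by ring
  -- decomposition of u = y₀ - xs
  set u : X := y₀ - xs with hu_def
  have hdec : u = (A.symm : Y →L[ℝ] X) ((B : X →L[ℝ] Y) u)
      - ((A.symm : Y →L[ℝ] X).comp ((T' x₀) - (T' xs))) u := by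
    have h1 : (T' x₀) u = (B : X →L[ℝ] Y) u := by rw [hB]
    have h2 : (T' xs) u = (A : X →L[ℝ] Y) u := by rw [hA]
    simp [ContinuousLinearMap.comp_apply, ContinuousLinearMap.sub_apply, h1, h2, map_sub]
  have hw : (A.symm : Y →L[ℝ] X) ((B : X →L[ℝ] Y) u)
      = ((A.symm : Y →L[ℝ] X).comp C) v - (1/2 : ℝ) • g 1 := by
    have hueq : u = v - (1/2 : ℝ) • (B.symm (T x₀)) := by
      rw [hu_def, hy₀, hv]; abel
    have hBu : (B : X →L[ℝ] Y) u = (B : X →L[ℝ] Y) v - (1/2 : ℝ) • T x₀ := by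
      rw [hueq, map_sub, map_smul]
      simp
    rw [hBu, map_sub, map_smul, hB]
    rw [hg_def]
    simp [hp1, hC_def]
  have hcomp : ‖((A.symm : Y →L[ℝ] X).comp ((T' x₀) - (T' xs))) u‖ ≤ ψ₀ * a * ‖u‖ := by
    calc ‖((A.symm : Y →L[ℝ] X).comp ((T' x₀) - (T' xs))) u‖
        ≤ ‖(A.symm : Y →L[ℝ] X).comp ((T' x₀) - (T' xs))‖ * ‖u‖ :=
          ContinuousLinearMap.le_opNorm _ _
      _ ≤ (ψ₀ * a) * ‖u‖ := by
          apply mul_le_mul_of_nonneg_right _ (norm_nonneg u)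
          exact hL0 _ hx₀
  have hwnorm : ‖(A.symm : Y →L[ℝ] X) ((B : X →L[ℝ] Y) u)‖
      ≤ ψ * a ^ 2 / 2 + (1/2 : ℝ) * (a + ψ₀ * a ^ 2 / 2) := by
    rw [hw]
    have hsplit : ((A.symm : Y →L[ℝ] X).comp C) v - (1/2 : ℝ) • g 1
        = -(g 1 - g 0 - ((A.symm : Y →L[ℝ] X).comp C) v) + (1/2 : ℝ) • g 1 - g 0 := by
      module
    rw [hsplit]
    calc ‖-(g 1 - g 0 - ((A.symm : Y →L[ℝ] X).comp C) v) + (1/2 : ℝ) • g 1 - g 0‖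
        ≤ ‖-(g 1 - g 0 - ((A.symm : Y →L[ℝ] X).comp C) v) + (1/2 : ℝ) • g 1‖ + ‖g 0‖ :=
          norm_sub_le _ _
      _ ≤ ‖g 1 - g 0 - ((A.symm : Y →L[ℝ] X).comp C) v‖ + ‖(1/2 : ℝ) • g 1‖ + ‖g 0‖ := by
          have := norm_add_le (-(g 1 - g 0 - ((A.symm : Y →L[ℝ] X).comp C) v)) ((1/2 : ℝ) • g 1)
          rw [norm_neg] at this
          linarith
      _ ≤ ψ * a ^ 2 / 2 + (1/2 : ℝ) * (a + ψ₀ * a ^ 2 / 2) := by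
          have hE1' := hE1
          rw [hg0, sub_zero] at hE1'
          rw [hg0, sub_zero, norm_zero, add_zero, norm_smul, Real.norm_eq_abs]
          have h12 : |(1/2 : ℝ)| = (1/2 : ℝ) := by norm_num
          rw [h12]
          nlinarith [hE1', hg1]
  have hmain : ‖u‖ ≤ (ψ * a ^ 2 / 2 + (1/2 : ℝ) * (a + ψ₀ * a ^ 2 / 2)) + ψ₀ * a * ‖u‖ := by
    have h1 : ‖u‖ = ‖(A.symm : Y →L[ℝ] X) ((B : X →L[ℝ] Y) u)
        - ((A.symm : Y →L[ℝ] X).comp ((T' x₀) - (T' xs))) u‖ := congrArg norm hdec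
    have h2 := norm_sub_le ((A.symm : Y →L[ℝ] X) ((B : X →L[ℝ] Y) u))
      (((A.symm : Y →L[ℝ] X).comp ((T' x₀) - (T' xs))) u)
    linarith [hwnorm, hcomp]
  have hpos : (0:ℝ) < 1 - ψ₀ * a := by linarith
  rw [div_mul_eq_mul_div, le_div_iff₀ hpos]
  nlinarith [hmain, norm_nonneg u]
end

section
/- Let T be continuously Fréchet differentiable with T(x*) = 0, T'(x*) invertible, centered Hölder condition ‖T'(x*)⁻¹(T'(x) − T'(x*))‖ ≤ κ₀‖x − x*‖^q and Hölder condition ‖T'(x*)⁻¹(T'(x) − T'(y))‖ ≤ κ‖x − y‖^q on D, q ∈ (0,1], κ₀ ≤ κ. For x₀ ∈ D with κ₀‖x₀ − x*‖^q < 1, setting y₀ = x₀ − (1/2) T'(x₀)⁻¹ T(x₀), one has ‖y₀ − x*‖ ≤ μ₁(‖x₀ − x*‖)‖x₀ − x*‖, where μ₁(a) = (κ a^q/(q+1) + (1 + κ₀ a^q/(q+1))/2)/(1 − κ₀ a^q). -/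
set_option maxHeartbeats 1000000 in
theorem stmt_13 {X Y : Type*} [NormedAddCommGroup X] [NormedSpace ℝ X] [CompleteSpace X]
    [NormedAddCommGroup Y] [NormedSpace ℝ Y] [CompleteSpace Y]
    (D : Set X) (hD : IsOpen D) (hDc : Convex ℝ D)
    (T : X → Y) (T' : X → X →L[ℝ] Y) (hT : ∀ x ∈ D, HasFDerivAt T (T' x) x)
    (hT'c : ContinuousOn T' D)
    (xs : X) (hxs : xs ∈ D) (hTxs : T xs = 0)
    (A : X ≃L[ℝ] Y) (hA : (A : X →L[ℝ] Y) = T' xs)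
    (κ₀ κ q : ℝ) (hκ₀ : 0 < κ₀) (hκ : 0 < κ) (hle : κ₀ ≤ κ)
    (hq : 0 < q) (hq1 : q ≤ 1)
    (hH0 : ∀ x ∈ D,
      ‖(A.symm : Y →L[ℝ] X).comp (T' x - T' xs)‖ ≤ κ₀ * ‖x - xs‖ ^ q)
    (hH : ∀ x ∈ D, ∀ y ∈ D,
      ‖(A.symm : Y →L[ℝ] X).comp (T' x - T' y)‖ ≤ κ * ‖x - y‖ ^ q)
    (x₀ : X) (hx₀ : x₀ ∈ D) (hseg : segment ℝ xs x₀ ⊆ D)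
    (hx₀r : κ₀ * ‖x₀ - xs‖ ^ q < 1)
    (B : X ≃L[ℝ] Y) (hB : (B : X →L[ℝ] Y) = T' x₀)
    (y₀ : X) (hy₀ : y₀ = x₀ - (1 / 2 : ℝ) • B.symm (T x₀)) :
    ‖y₀ - xs‖ ≤
      ((κ * ‖x₀ - xs‖ ^ q / (q + 1) + (1 + κ₀ * ‖x₀ - xs‖ ^ q / (q + 1)) / 2) /
          (1 - κ₀ * ‖x₀ - xs‖ ^ q)) * ‖x₀ - xs‖ := by
  set e := x₀ - xs with he
  set a := ‖e‖ with ha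
  have ha0 : (0:ℝ) ≤ a := norm_nonneg _
  have haq0 : (0:ℝ) ≤ a ^ q := Real.rpow_nonneg ha0 q
  have hq1' : (0:ℝ) < q + 1 := by linarith
  -- segment points
  have hmem : ∀ t ∈ Set.Icc (0:ℝ) 1, xs + t • e ∈ D := by
    intro t ht
    apply hseg
    refine ⟨1 - t, t, by linarith [ht.2], ht.1, by linarith [ht.2], ?_⟩
    rw [he]; module
  set C : Y →L[ℝ] X := (A.symm : Y →L[ℝ] X) with hC
  set g : ℝ → X := fun t => C (T (xs + t • e)) with hg_def
  set g' : ℝ → X := fun t => (C.comp (T' (xs + t • e))) e with hg'_def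
  have hpath : Continuous fun t : ℝ => xs + t • e := by continuity
  have hgderiv : ∀ t ∈ Set.uIcc (0:ℝ) 1, HasDerivAt g (g' t) t := by
    intro t ht
    rw [Set.uIcc_of_le zero_le_one] at ht
    have h1 : HasDerivAt (fun t : ℝ => xs + t • e) e t := by
      simpa using ((hasDerivAt_id t).smul_const e).const_add xs
    have h2 : HasFDerivAt T (T' (xs + t • e)) (xs + t • e) := hT _ (hmem t ht)
    have h3 : HasFDerivAt (fun z => C (T z)) (C.comp (T' (xs + t • e))) (xs + t • e) :=
      (C.hasFDerivAt).comp _ h2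
    have := h3.comp_hasDerivAt t h1
    simpa [g, g', Function.comp_def] using this
  have hg'cont : ContinuousOn g' (Set.uIcc (0:ℝ) 1) := by
    rw [Set.uIcc_of_le zero_le_one]
    have h1 : ContinuousOn (fun t : ℝ => T' (xs + t • e)) (Set.Icc (0:ℝ) 1) :=
      hT'c.comp hpath.continuousOn (fun t ht => hmem t ht)
    have h2 : ContinuousOn (fun t : ℝ => C.comp (T' (xs + t • e))) (Set.Icc (0:ℝ) 1) := by
      exact (ContinuousLinearMap.compL ℝ X Y X C).continuous.comp_continuousOn h1
    exact h2.clm_apply continuousOn_const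
  have hg'int : IntervalIntegrable g' MeasureTheory.volume 0 1 :=
    hg'cont.intervalIntegrable
  have hFTC : ∫ t in (0:ℝ)..1, g' t = C (T x₀) := by
    rw [intervalIntegral.integral_eq_sub_of_hasDerivAt hgderiv hg'int]
    simp [g, hTxs, he]
  -- the two integral bounds
  have hbound : ∀ (L : X →L[ℝ] Y) (c : ℝ), (0 ≤ c) →
      (∀ t ∈ Set.Icc (0:ℝ) 1, ‖C.comp (T' (xs + t • e) - L)‖ ≤ c) → True := fun _ _ _ _ => trivial
  -- u bound
  have hIcc : ∀ t : ℝ, t ∈ Set.Ioc (0:ℝ) 1 → t ∈ Set.Icc (0:ℝ) 1 := fun t ht => Set.Ioc_subset_Icc_self ht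
  have hnorm_sub : ∀ t ∈ Set.Icc (0:ℝ) 1, ‖x₀ - (xs + t • e)‖ = (1 - t) * a := by
    intro t ht
    have : x₀ - (xs + t • e) = (1 - t) • e := by rw [he]; module
    rw [this, norm_smul, Real.norm_eq_abs, abs_of_nonneg (by linarith [ht.2])]
  have hnorm_sub2 : ∀ t ∈ Set.Icc (0:ℝ) 1, ‖(xs + t • e) - xs‖ = t * a := by
    intro t ht
    have : (xs + t • e) - xs = t • e := by module
    rw [this, norm_smul, Real.norm_eq_abs, abs_of_nonneg ht.1]
  -- integral of (1-t)^q and t^q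
  have hJ1 : (∫ t in (0:ℝ)..1, (1 - t) ^ q) = 1 / (q + 1) := by
    rw [intervalIntegral.integral_comp_sub_left (fun s => s ^ q) 1]
    norm_num
    rw [integral_rpow (Or.inl (by linarith))]
    rw [Real.zero_rpow (by linarith), Real.one_rpow]
    ring
  have hJ2 : (∫ t in (0:ℝ)..1, t ^ q) = 1 / (q + 1) := by
    rw [integral_rpow (Or.inl (by linarith))]
    rw [Real.zero_rpow (by linarith), Real.one_rpow]
    ring
  -- definitions of u and v
  set M : X →L[ℝ] X := C.comp (T' x₀) with hM
  set u : X := M e - C (T x₀) with hu_def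
  set v : X := C (T x₀) - e with hv_def
  -- u as an integral
  have hconst : (∫ _ in (0:ℝ)..1, M e) = M e := by simp
  have hu_int : u = ∫ t in (0:ℝ)..1, (M e - g' t) := by
    rw [intervalIntegral.integral_sub (intervalIntegrable_const) hg'int, hconst, hFTC]
  have hub_cont : Continuous fun t : ℝ => κ * ((1 - t) ^ q * a ^ q) * a := by
    have : Continuous fun t : ℝ => (1 - t) ^ q :=
      (continuous_const.sub continuous_id).rpow_const (fun x => Or.inr hq.le)
    exact (continuous_const.mul (this.mul continuous_const)).mul continuous_const
  have hu_bd : ‖u‖ ≤ κ * a ^ q * a / (q + 1) := by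
    rw [hu_int]
    have hb : ∀ᵐ t ∂(MeasureTheory.volume.restrict (Set.uIoc (0:ℝ) 1)),
        ‖M e - g' t‖ ≤ κ * ((1 - t) ^ q * a ^ q) * a := by
      refine (MeasureTheory.ae_restrict_mem measurableSet_uIoc).mono fun t ht => ?_
      rw [Set.uIoc_of_le zero_le_one] at ht
      have ht' : t ∈ Set.Icc (0:ℝ) 1 := Set.Ioc_subset_Icc_self ht
      have h1 : M e - g' t = (C.comp (T' x₀ - T' (xs + t • e))) e := by
        simp [M, g', ContinuousLinearMap.comp_sub, ContinuousLinearMap.sub_apply]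
      rw [h1]
      calc ‖(C.comp (T' x₀ - T' (xs + t • e))) e‖
          ≤ ‖C.comp (T' x₀ - T' (xs + t • e))‖ * a := (C.comp _).le_opNorm e
        _ ≤ (κ * ‖x₀ - (xs + t • e)‖ ^ q) * a := by
            apply mul_le_mul_of_nonneg_right _ ha0
            exact hH x₀ hx₀ _ (hmem t ht')
        _ = κ * ((1 - t) ^ q * a ^ q) * a := by
            rw [hnorm_sub t ht', Real.mul_rpow (by linarith [ht.2]) ha0]
    calc ‖∫ t in (0:ℝ)..1, (M e - g' t)‖
        ≤ |∫ t in (0:ℝ)..1, κ * ((1 - t) ^ q * a ^ q) * a| :=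
          intervalIntegral.norm_integral_le_abs_of_norm_le hb (hub_cont.intervalIntegrable 0 1)
      _ = κ * a ^ q * a / (q + 1) := by
          have h2 : (fun t : ℝ => κ * ((1 - t) ^ q * a ^ q) * a)
              = fun t : ℝ => (κ * a ^ q * a) * (1 - t) ^ q := by funext t; ring
          rw [h2, intervalIntegral.integral_const_mul, hJ1, abs_of_nonneg]
          · ring
          · positivity
  -- v as an integral
  have hid : ∀ z : X, (C.comp (T' xs)) z = z := by
    intro z
    rw [← hA]
    exact A.symm_apply_apply z
  have hv_int : v = ∫ t in (0:ℝ)..1, (g' t - e) := by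
    rw [intervalIntegral.integral_sub hg'int intervalIntegrable_const]
    simp [hFTC, hv_def]
  have hvb_cont : Continuous fun t : ℝ => κ₀ * (t ^ q * a ^ q) * a := by
    have : Continuous fun t : ℝ => t ^ q :=
      continuous_id.rpow_const (fun x => Or.inr hq.le)
    exact (continuous_const.mul (this.mul continuous_const)).mul continuous_const
  have hv_bd : ‖v‖ ≤ κ₀ * a ^ q * a / (q + 1) := by
    rw [hv_int]
    have hb : ∀ᵐ t ∂(MeasureTheory.volume.restrict (Set.uIoc (0:ℝ) 1)),
        ‖g' t - e‖ ≤ κ₀ * (t ^ q * a ^ q) * a := by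
      refine (MeasureTheory.ae_restrict_mem measurableSet_uIoc).mono fun t ht => ?_
      rw [Set.uIoc_of_le zero_le_one] at ht
      have ht' : t ∈ Set.Icc (0:ℝ) 1 := Set.Ioc_subset_Icc_self ht
      have h1 : g' t - e = (C.comp (T' (xs + t • e) - T' xs)) e := by
        have := hid e
        simp only [ContinuousLinearMap.comp_sub, ContinuousLinearMap.sub_apply, g']
        rw [this]
      rw [h1]
      calc ‖(C.comp (T' (xs + t • e) - T' xs)) e‖
          ≤ ‖C.comp (T' (xs + t • e) - T' xs)‖ * a := (C.comp _).le_opNorm e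
        _ ≤ (κ₀ * ‖(xs + t • e) - xs‖ ^ q) * a := by
            apply mul_le_mul_of_nonneg_right _ ha0
            exact hH0 _ (hmem t ht')
        _ = κ₀ * (t ^ q * a ^ q) * a := by
            rw [hnorm_sub2 t ht', Real.mul_rpow ht'.1 ha0]
    calc ‖∫ t in (0:ℝ)..1, (g' t - e)‖
        ≤ |∫ t in (0:ℝ)..1, κ₀ * (t ^ q * a ^ q) * a| :=
          intervalIntegral.norm_integral_le_abs_of_norm_le hb (hvb_cont.intervalIntegrable 0 1)
      _ = κ₀ * a ^ q * a / (q + 1) := by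
          have h2 : (fun t : ℝ => κ₀ * (t ^ q * a ^ q) * a)
              = fun t : ℝ => (κ₀ * a ^ q * a) * t ^ q := by funext t; ring
          rw [h2, intervalIntegral.integral_const_mul, hJ2, abs_of_nonneg]
          · ring
          · positivity
  -- key identity
  set w : X := y₀ - xs with hw_def
  have hMB : M (B.symm (T x₀)) = C (T x₀) := by
    rw [hM, ContinuousLinearMap.comp_apply, ← hB]
    simp
  have hMw : M w = u + (1 / 2 : ℝ) • e + (1 / 2 : ℝ) • v := by
    have h1 : w = e - (1 / 2 : ℝ) • B.symm (T x₀) := by rw [hw_def, hy₀, he]; module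
    rw [h1, map_sub, map_smul, hMB, hu_def, hv_def]
    module
  have hMw_bd : ‖M w‖ ≤ κ * a ^ q * a / (q + 1) + (1 / 2) * a + (1 / 2) * (κ₀ * a ^ q * a / (q + 1)) := by
    rw [hMw]
    calc ‖u + (1 / 2 : ℝ) • e + (1 / 2 : ℝ) • v‖
        ≤ ‖u‖ + ‖(1 / 2 : ℝ) • e‖ + ‖(1 / 2 : ℝ) • v‖ := norm_add₃_le
      _ = ‖u‖ + (1 / 2) * ‖e‖ + (1 / 2) * ‖v‖ := by
          rw [norm_smul, norm_smul, Real.norm_eq_abs,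
            abs_of_nonneg (by norm_num : (0:ℝ) ≤ 1/2)]
      _ ≤ κ * a ^ q * a / (q + 1) + (1 / 2) * a + (1 / 2) * (κ₀ * a ^ q * a / (q + 1)) := by
          have := hu_bd; have := hv_bd
          gcongr
  -- lower bound
  have hlow : (1 - κ₀ * a ^ q) * ‖w‖ ≤ ‖M w‖ := by
    have h1 : (C.comp (T' x₀ - T' xs)) w = M w - w := by
      rw [ContinuousLinearMap.comp_sub, ContinuousLinearMap.sub_apply, hid w, hM]
    have h2 : ‖w‖ ≤ ‖M w‖ + κ₀ * a ^ q * ‖w‖ := by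
      calc ‖w‖ = ‖M w - (C.comp (T' x₀ - T' xs)) w‖ := by rw [h1, sub_sub_cancel]
        _ ≤ ‖M w‖ + ‖(C.comp (T' x₀ - T' xs)) w‖ := norm_sub_le _ _
        _ ≤ ‖M w‖ + κ₀ * a ^ q * ‖w‖ := by
            gcongr
            calc ‖(C.comp (T' x₀ - T' xs)) w‖
                ≤ ‖C.comp (T' x₀ - T' xs)‖ * ‖w‖ := (C.comp _).le_opNorm w
              _ ≤ (κ₀ * a ^ q) * ‖w‖ := by
                  apply mul_le_mul_of_nonneg_right _ (norm_nonneg w)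
                  exact hH0 x₀ hx₀
    linarith
  -- conclude
  have hd : (0:ℝ) < 1 - κ₀ * a ^ q := by linarith
  rw [div_mul_eq_mul_div, le_div_iff₀ hd]
  have hN : (κ * a ^ q / (q + 1) + (1 + κ₀ * a ^ q / (q + 1)) / 2) * a
      = κ * a ^ q * a / (q + 1) + (1 / 2) * a + (1 / 2) * (κ₀ * a ^ q * a / (q + 1)) := by
    ring
  rw [hN]
  nlinarith [norm_nonneg w]
end
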